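/- Let g ≥ 1 and let x_1, …, x_g be pairwise distinct complex numbers. Then for every integer n with 0 ≤ n ≤ g−1, one has ∑_{i=1}^g x_i^{g} · χ_n(x_i; x_1, …, x_g) / F'(x_i) = (−1)^n h_{n+1}(x_1, …, x_g). -/

import Mathlib

open Finset

/-- `χ_m(t; x_1, …, x_g) = ∑_{j=0}^m (-1)^j h_j(x_1,…,x_g) t^{m-j}`, where `h_j`
is the `j`-th elementary symmetric polynomial of the multiset of the `x_i`. -/
noncomputable def chi (m : ℕ) (t : ℂ) (s : Multiset ℂ) : ℂ :=
  ∑ j ∈ Finset.range (m + 1), (-1) ^ j * s.esymm j * t ^ (m - j)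

lemma coeff_pred_eq_sum {g : ℕ} (x : Fin g → ℂ) (hx : Function.Injective x)
    (P : Polynomial ℂ) (hP : P.degree < (g : ℕ)) :
    P.coeff (g - 1) = ∑ i, P.eval (x i) / ∏ l ∈ univ.erase i, (x i - x l) := by
  classical
  have hvs : Set.InjOn x (univ : Finset (Fin g)) := Function.Injective.injOn hx
  have hcard : #(univ : Finset (Fin g)) = g := by simp
  have hP' : P.degree < #(univ : Finset (Fin g)) := by rwa [hcard]
  have hrep := Lagrange.eq_interpolate hvs hP'
  conv_lhs => rw [hrep]
  rw [Lagrange.interpolate_apply, Polynomial.finset_sum_coeff]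
  refine Finset.sum_congr rfl fun i _ => ?_
  rw [Polynomial.coeff_C_mul]
  have hb : (Lagrange.basis univ x i).coeff (g - 1)
      = ∏ l ∈ univ.erase i, (x i - x l)⁻¹ := by
    have hnd : (Lagrange.basis univ x i).natDegree = g - 1 := by
      rw [Lagrange.natDegree_basis hvs (mem_univ i), hcard]
    have h2 : (Lagrange.basis univ x i).coeff (g - 1)
        = (Lagrange.basis univ x i).leadingCoeff := by
      rw [Polynomial.leadingCoeff, hnd]
    rw [h2, Lagrange.basis, Polynomial.leadingCoeff_prod]
    refine Finset.prod_congr rfl fun j _ => ?_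
    rw [Lagrange.basisDivisor, Polynomial.leadingCoeff_mul, Polynomial.leadingCoeff_C,
      (Polynomial.monic_X_sub_C (x j)).leadingCoeff, mul_one]
  rw [hb, div_eq_mul_inv, ← Finset.prod_inv_distrib]

/-- For pairwise distinct `x_1, …, x_g` and `0 ≤ n ≤ g−1`,
`∑_{i=1}^g x_i^g χ_n(x_i; x_1,…,x_g) / F'(x_i) = (−1)^n h_{n+1}(x_1,…,x_g)`. -/
theorem sum_powg_chi_div_Fderiv
    (g : ℕ) (hg : 1 ≤ g) (x : Fin g → ℂ) (hx : Function.Injective x)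
    (n : ℕ) (hn : n ≤ g - 1) :
    ∑ i, (x i) ^ g * chi n (x i) (Multiset.map x univ.val)
          / (∏ l ∈ univ.erase i, (x i - x l)) =
      (-1) ^ n * (Multiset.map x univ.val).esymm (n + 1) := by
  classical
  set M : Multiset ℂ := Multiset.map x univ.val with hM
  have hMcard : Multiset.card M = g := by simp [hM]
  -- scalar Vieta
  have vieta : ∀ t : ℂ,
      ∑ j ∈ range (g + 1), (-1 : ℂ) ^ j * M.esymm j * t ^ (g - j)
        = ∏ l, (t - x l) := by
    intro t
    have h := congrArg (Polynomial.eval t) (Multiset.prod_X_sub_X_eq_sum_esymm M)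
    rw [hMcard] at h
    simp only [Polynomial.eval_multiset_prod, Polynomial.eval_finset_sum, Polynomial.eval_mul,
      Polynomial.eval_pow, Polynomial.eval_neg, Polynomial.eval_one, Polynomial.eval_C,
      Polynomial.eval_X] at h
    have h1 : ∑ j ∈ range (g + 1), (-1 : ℂ) ^ j * M.esymm j * t ^ (g - j)
        = ∑ j ∈ range (g + 1), (-1 : ℂ) ^ j * (M.esymm j * t ^ (g - j)) := by
      simp [mul_assoc]
    rw [h1, ← h, hM, Multiset.map_map]
    simp [Finset.prod, Function.comp_def]
  -- the interpolating polynomial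
  set P : Polynomial ℂ :=
    ∑ j ∈ Finset.Ico (n + 1) (g + 1),
      Polynomial.C ((-1 : ℂ) ^ (j + 1) * M.esymm j) * Polynomial.X ^ (g + n - j) with hP
  have hdeg : P.degree < (g : ℕ) := by
    rw [hP]
    refine lt_of_le_of_lt (Polynomial.degree_sum_le _ _) ?_
    rw [Finset.sup_lt_iff (by exact_mod_cast WithBot.bot_lt_coe g)]
    intro j hj
    rw [Finset.mem_Ico] at hj
    have hlt : g + n - j < g := by omega
    exact lt_of_le_of_lt (Polynomial.degree_C_mul_X_pow_le _ _) (by exact_mod_cast hlt)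
  -- its coefficient of X^(g-1)
  have hcoeff : P.coeff (g - 1) = (-1 : ℂ) ^ n * M.esymm (n + 1) := by
    rw [hP, Polynomial.finset_sum_coeff]
    have hmem : n + 1 ∈ Finset.Ico (n + 1) (g + 1) := by
      rw [Finset.mem_Ico]; omega
    rw [Finset.sum_eq_single_of_mem (n + 1) hmem]
    · rw [Polynomial.coeff_C_mul, Polynomial.coeff_X_pow, if_pos (by omega)]
      have : (-1 : ℂ) ^ (n + 1 + 1) = (-1 : ℂ) ^ n := by
        rw [pow_succ, pow_succ]; ring
      rw [this, mul_one]
    · intro j hj hne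
      rw [Finset.mem_Ico] at hj
      rw [Polynomial.coeff_C_mul, Polynomial.coeff_X_pow, if_neg (by omega), mul_zero]
  -- its values at the nodes
  have heval : ∀ i : Fin g, P.eval (x i) = (x i) ^ g * chi n (x i) M := by
    intro i
    set t := x i with ht
    have hPeval : P.eval t
        = ∑ j ∈ Finset.Ico (n + 1) (g + 1), (-1 : ℂ) ^ (j + 1) * M.esymm j * t ^ (g + n - j) := by
      rw [hP, Polynomial.eval_finset_sum]
      exact Finset.sum_congr rfl fun j _ => by
        rw [Polynomial.eval_mul, Polynomial.eval_C, Polynomial.eval_pow, Polynomial.eval_X]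
    have hchi : (t : ℂ) ^ g * chi n t M
        = ∑ j ∈ range (n + 1), (-1 : ℂ) ^ j * M.esymm j * t ^ (g + n - j) := by
      rw [chi, Finset.mul_sum]
      refine Finset.sum_congr rfl fun j hj => ?_
      rw [Finset.mem_range] at hj
      have : t ^ g * t ^ (n - j) = t ^ (g + n - j) := by
        rw [← pow_add]
        congr 1
        omega
      ring_nf
      rw [mul_comm (t ^ g), mul_assoc, mul_comm (t ^ (n-j)) (t ^ g), this]
      ring
    have hzero : ∑ j ∈ range (g + 1), (-1 : ℂ) ^ j * M.esymm j * t ^ (g + n - j) = 0 := by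
      have hsplit : ∀ j ∈ range (g + 1),
          (-1 : ℂ) ^ j * M.esymm j * t ^ (g + n - j)
            = t ^ n * ((-1 : ℂ) ^ j * M.esymm j * t ^ (g - j)) := by
        intro j hj
        rw [Finset.mem_range] at hj
        have : t ^ (g + n - j) = t ^ n * t ^ (g - j) := by
          rw [← pow_add]; congr 1; omega
        rw [this]; ring
      rw [Finset.sum_congr rfl hsplit, ← Finset.mul_sum, vieta t]
      have : ∏ l, (t - x l) = 0 :=
        Finset.prod_eq_zero (Finset.mem_univ i) (by rw [ht, sub_self])
      rw [this, mul_zero]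
    have hcat : ∑ j ∈ range (n + 1), (-1 : ℂ) ^ j * M.esymm j * t ^ (g + n - j)
        + ∑ j ∈ Finset.Ico (n + 1) (g + 1), (-1 : ℂ) ^ j * M.esymm j * t ^ (g + n - j)
        = ∑ j ∈ range (g + 1), (-1 : ℂ) ^ j * M.esymm j * t ^ (g + n - j) := by
      rw [Finset.range_eq_Ico, Finset.range_eq_Ico]
      exact Finset.sum_Ico_consecutive _ (by omega) (by omega)
    rw [hPeval, hchi]
    have : ∑ j ∈ Finset.Ico (n + 1) (g + 1), (-1 : ℂ) ^ (j + 1) * M.esymm j * t ^ (g + n - j)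
        = -∑ j ∈ Finset.Ico (n + 1) (g + 1), (-1 : ℂ) ^ j * M.esymm j * t ^ (g + n - j) := by
      rw [← Finset.sum_neg_distrib]
      exact Finset.sum_congr rfl fun j _ => by rw [pow_succ]; ring
    rw [this]
    linear_combination -hcat - hzero
  calc ∑ i, (x i) ^ g * chi n (x i) M / (∏ l ∈ univ.erase i, (x i - x l))
      = ∑ i, P.eval (x i) / (∏ l ∈ univ.erase i, (x i - x l)) :=
        Finset.sum_congr rfl fun i _ => by rw [heval i]
    _ = P.coeff (g - 1) := (coeff_pred_eq_sum x hx P hdeg).symm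
    _ = (-1 : ℂ) ^ n * M.esymm (n + 1) := hcoeff
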